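/- Let A be a nontrivial commutative ring equipped with an ℕ-grading, i.e., an internal direct sum decomposition A = ⊕_{n ∈ ℕ} 𝒜ₙ into additive subgroups with 𝒜ₘ · 𝒜ₙ ⊆ 𝒜_{m+n} and 1 ∈ 𝒜₀ (a graded ring structure). Suppose t ∈ 𝒜_d is a homogeneous element of degree d > 0 which is not a zero divisor in A, and suppose the quotient ring A/(t) is an integral domain. Then A is an integral domain. -/

import Mathlib

open DirectSum

/-- Every nonzero element is `t ^ n * u` with `u ∉ (t)`. -/
lemma aux_factor {A : Type*} [CommRing A]
    (𝒜 : ℕ → AddSubgroup A) [GradedRing 𝒜]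
    (d : ℕ) (hd : 0 < d) (t : A) (ht : t ∈ 𝒜 d)
    (htnzd : t ∈ nonZeroDivisors A) :
    ∀ x : A, x ≠ 0 → ∃ n u, u ∉ Ideal.span {t} ∧ x = t ^ n * u := by
  classical
  have top_mem : ∀ x : A, x ≠ 0 → (decompose 𝒜 x).support.sup id ∈ (decompose 𝒜 x).support ∧
      ((decompose 𝒜 x) ((decompose 𝒜 x).support.sup id) : A) ≠ 0 := by
    intro x hx
    have hne : (decompose 𝒜 x).support.Nonempty := by
      rw [Finset.nonempty_iff_ne_empty, Ne, DFinsupp.support_eq_empty]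
      intro h
      exact hx (by simpa using congrArg (DirectSum.decompose 𝒜).symm h)
    obtain ⟨b, hb, hbe⟩ := Finset.exists_mem_eq_sup _ hne id
    rw [hbe]
    refine ⟨hb, ?_⟩
    simpa [DFinsupp.mem_support_iff, ← ZeroMemClass.coe_eq_zero] using hb
  intro x hx
  generalize hN : (decompose 𝒜 x).support.sup id = N
  induction N using Nat.strong_induction_on generalizing x with
  | _ N ih =>
    by_cases hmem : x ∈ Ideal.span {t}
    · obtain ⟨u, hu⟩ := Ideal.mem_span_singleton.mp hmem
      have hu0 : u ≠ 0 := by rintro rfl; simp at hu; exact hx hu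
      -- top degree of u is strictly smaller than that of x
      set M := (decompose 𝒜 u).support.sup id with hM
      obtain ⟨hMmem, hMne⟩ := top_mem u hu0
      have key : ((decompose 𝒜 x) (d + M) : A) = t * (decompose 𝒜 u) M := by
        rw [hu]
        exact DirectSum.coe_decompose_mul_add_of_left_mem 𝒜 ht
      have hxdM : ((decompose 𝒜 x) (d + M) : A) ≠ 0 := by
        rw [key]
        intro h
        exact hMne ((mem_nonZeroDivisors_iff.mp htnzd).2 _ (by rw [mul_comm]; exact h))
      have hdM_mem : d + M ∈ (decompose 𝒜 x).support := by
        rw [DFinsupp.mem_support_iff]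
        intro h
        exact hxdM (by rw [h]; rfl)
      have hlt : M < N := by
        have : d + M ≤ N := by
          rw [← hN]; exact Finset.le_sup (f := id) hdM_mem
        omega
      obtain ⟨n, v, hv, hvu⟩ := ih M hlt u hu0 rfl
      exact ⟨n + 1, v, hv, by rw [hu, hvu]; ring⟩
    · exact ⟨0, x, hmem, by ring⟩

/-- Let `A` be a nontrivial commutative ring with an ℕ-grading by additive
subgroups `𝒜ₙ`.  If `t ∈ 𝒜_d` is a homogeneous element of positive degree `d`
which is not a zero divisor, and the quotient `A/(t)` is an integral domain,
then `A` is an integral domain. -/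
theorem stmt_8 (A : Type*) [CommRing A] [Nontrivial A]
    (𝒜 : ℕ → AddSubgroup A) [GradedRing 𝒜]
    (d : ℕ) (hd : 0 < d) (t : A) (ht : t ∈ 𝒜 d)
    (htnzd : t ∈ nonZeroDivisors A)
    (hquot : IsDomain (A ⧸ Ideal.span {t})) :
    IsDomain A := by
  have hprime : (Ideal.span {t} : Ideal A).IsPrime :=
    (Ideal.Quotient.isDomain_iff_prime _).mp hquot
  have : NoZeroDivisors A := by
    constructor
    intro a b hab
    by_contra h
    push_neg at h
    obtain ⟨ha, hb⟩ := h
    obtain ⟨m, a', ha', haeq⟩ := aux_factor 𝒜 d hd t ht htnzd a ha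
    obtain ⟨n, b', hb', hbeq⟩ := aux_factor 𝒜 d hd t ht htnzd b hb
    have h0 : t ^ (m + n) * (a' * b') = 0 := by
      rw [pow_add]; rw [haeq, hbeq] at hab; linear_combination hab
    have hab' : a' * b' = 0 := (mem_nonZeroDivisors_iff.mp (pow_mem htnzd (m + n))).2 _ (by rw [mul_comm]; exact h0)
    have : a' * b' ∈ Ideal.span {t} := by rw [hab']; exact Ideal.zero_mem _
    rcases hprime.mem_or_mem this with h | h
    · exact ha' h
    · exact hb' h
  exact NoZeroDivisors.to_isDomain A
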